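/- arXiv:1909.10896 — 2 statements merged into one kernel-verified Lean document; each statement's English description precedes it below -/
import Mathlib

section
/- Let (S,+) be a countable adequate commutative partial semigroup and let ⟨x_n⟩_{n=1}^∞ be an adequate sequence in S. Then there exists an idempotent ultrafilter p (i.e. p+p = p) with p ∈ ⋂_{m=1}^∞ cl(FS(⟨x_n⟩_{n=m}^∞)) ∩ δS. -/
namespace PS

variable {S : Type*}

/-- Left-to-right sum of a list in a partial semigroup (`none` on the empty list). -/
def listSum (P : S → S → Option S) : List S → Option S
  | [] => none
  | [a] => some a
  | a :: b :: l => (listSum P (b :: l)).bind fun t => P a t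

/-- The partial sum `∑_{t ∈ H} y t`, taken in increasing order of the indices. -/
def fsum (P : S → S → Option S) (y : ℕ → S) (H : Finset ℕ) : Option S :=
  listSum P ((H.sort (· ≤ ·)).map y)

/-- Associativity of a partial operation, in the strong (Kleene) sense. -/
def Assoc (P : S → S → Option S) : Prop :=
  ∀ a b c : S, (P a b).bind (fun t => P t c) = (P b c).bind fun t => P a t

/-- Commutativity: `a + b = b + a` whenever either side is defined. -/
def Comm (P : S → S → Option S) : Prop := ∀ a b : S, P a b = P b a

/-- `φ(s) = {t : s + t is defined}`. -/
def phi (P : S → S → Option S) (s : S) : Set S := {t | (P s t).isSome}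

/-- `σ(H) = ⋂_{s ∈ H} φ(s)`. -/
def sigma (P : S → S → Option S) (H : Finset S) : Set S :=
  {t | ∀ s ∈ H, (P s t).isSome = true}

/-- An adequate partial semigroup: `σ(H) ≠ ∅` for all finite nonempty `H`. -/
def Adequate (P : S → S → Option S) : Prop :=
  ∀ H : Finset S, H.Nonempty → (sigma P H).Nonempty

/-- `FS(⟨x_n⟩_{n=m}^∞)`. -/
def FSfrom (P : S → S → Option S) (x : ℕ → S) (m : ℕ) : Set S :=
  {s | ∃ H : Finset ℕ, H.Nonempty ∧ (∀ n ∈ H, m ≤ n) ∧ fsum P x H = some s}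

/-- `FS` of the first `m` terms of a sequence. -/
def FSfin (P : S → S → Option S) (x : ℕ → S) (m : ℕ) : Set S :=
  {s | ∃ H : Finset ℕ, H.Nonempty ∧ H ⊆ Finset.range m ∧ fsum P x H = some s}

/-- An adequate sequence. -/
def AdequateSeq (P : S → S → Option S) (x : ℕ → S) : Prop :=
  (∀ F : Finset ℕ, F.Nonempty → (fsum P x F).isSome = true) ∧
  (∀ F : Finset S, F.Nonempty → ∃ m : ℕ, FSfrom P x m ⊆ sigma P F)

/-- `δS ⊆ βS`. -/
def deltaS (P : S → S → Option S) : Set (Ultrafilter S) :=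
  {p | ∀ s : S, phi P s ∈ p}

/-- `-x + A = {y ∈ φ(x) : x + y ∈ A}`. -/
def shift (P : S → S → Option S) (x : S) (A : Set S) : Set S :=
  {y | ∃ z ∈ A, P x y = some z}

/-- `IsSum P r p q` expresses that `r = p + q` in `δS`:
`A ∈ p + q` iff `{x : -x + A ∈ q} ∈ p`. -/
def IsSum (P : S → S → Option S) (r p q : Ultrafilter S) : Prop :=
  ∀ A : Set S, A ∈ r ↔ {x : S | shift P x A ∈ q} ∈ p

/-- A finite product subsystem `⟨y_n⟩_{n<m}` of `FS(⟨x_n⟩_{n=k}^∞)`. -/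
def IsProdSubsysFin (P : S → S → Option S) (x : ℕ → S) (k m : ℕ) (y : ℕ → S) : Prop :=
  ∃ H : ℕ → Finset ℕ,
    (∀ n < m, (H n).Nonempty) ∧
    (∀ t ∈ H 0, k ≤ t) ∧
    (∀ n, n + 1 < m → ∀ s ∈ H n, ∀ t ∈ H (n + 1), s < t) ∧
    (∀ n < m, fsum P x (H n) = some (y n))

/-- An infinite product subsystem `⟨y_n⟩_{n=0}^∞` of `FS(⟨x_n⟩_{n=k}^∞)`. -/
def IsProdSubsysInf (P : S → S → Option S) (x : ℕ → S) (k : ℕ) (y : ℕ → S) : Prop :=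
  ∃ H : ℕ → Finset ℕ,
    (∀ n, (H n).Nonempty) ∧
    (∀ t ∈ H 0, k ≤ t) ∧
    (∀ n, ∀ s ∈ H n, ∀ t ∈ H (n + 1), s < t) ∧
    (∀ n, fsum P x (H n) = some (y n))

/-- `⟨x_n⟩_{n<m}` is a weak product subsystem of `⟨y_n⟩_{n=k}^∞`, witnessed by `H`. -/
def IsWPSWith (P : S → S → Option S) (y : ℕ → S) (k m : ℕ) (x : ℕ → S)
    (H : ℕ → Finset ℕ) : Prop :=
  (∀ n < m, (H n).Nonempty) ∧
  (∀ n < m, ∀ t ∈ H n, k ≤ t) ∧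
  (∀ n₁ < m, ∀ n₂ < m, n₁ ≠ n₂ → Disjoint (H n₁) (H n₂)) ∧
  (∀ n < m, fsum P y (H n) = some (x n))

/-- `⟨x_n⟩_{n<m}` is a weak product subsystem of `⟨y_n⟩_{n=k}^∞`. -/
def IsWPS (P : S → S → Option S) (y : ℕ → S) (k m : ℕ) (x : ℕ → S) : Prop :=
  ∃ H : ℕ → Finset ℕ, IsWPSWith P y k m x H

/-- The coordinatewise partial operation on a finite product, defined exactly when
every coordinate operation is defined. -/
def prodOp {l : ℕ} {T : Fin l → Type*} (P : ∀ i, T i → T i → Option (T i)) :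
    (∀ i, T i) → (∀ i, T i) → Option (∀ i, T i) := fun a b =>
  if h : ∀ i, (P i (a i) (b i)).isSome then
    some fun i => (P i (a i) (b i)).get (h i)
  else none

end PS

namespace PS

variable {S : Type*} (P : S → S → Option S)

theorem shift_mono {A B : Set S} (h : A ⊆ B) (x : S) : shift P x A ⊆ shift P x B :=
  fun y ⟨z, hz, he⟩ => ⟨z, h hz, he⟩

theorem shift_univ (x : S) : shift P x Set.univ = phi P x := by
  ext y
  simp only [shift, phi, Set.mem_setOf_eq, Option.isSome_iff_exists]
  exact ⟨fun ⟨z, _, h⟩ => ⟨z, h⟩, fun ⟨z, h⟩ => ⟨z, trivial, h⟩⟩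

theorem shift_inter (x : S) (A B : Set S) :
    shift P x (A ∩ B) = shift P x A ∩ shift P x B := by
  ext y
  constructor
  · rintro ⟨z, ⟨hA, hB⟩, he⟩; exact ⟨⟨z, hA, he⟩, ⟨z, hB, he⟩⟩
  · rintro ⟨⟨z, hA, he⟩, ⟨z', hB, he'⟩⟩
    rw [he] at he'
    exact ⟨z, ⟨hA, (Option.some_injective _ he') ▸ hB⟩, he⟩

theorem shift_compl (x : S) (A : Set S) :
    shift P x Aᶜ = phi P x \ shift P x A := by
  ext y
  constructor
  · rintro ⟨z, hz, he⟩
    refine ⟨by simp [phi, he], ?_⟩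
    rintro ⟨z', hz', he'⟩
    rw [he] at he'
    exact hz ((Option.some_injective _ he') ▸ hz')
  · rintro ⟨hy, hns⟩
    obtain ⟨z, he⟩ := Option.isSome_iff_exists.mp hy
    exact ⟨z, fun hz => hns ⟨z, hz, he⟩, he⟩

/-- The sum `p + q` of ultrafilters, for `q ∈ δS`. -/
def sumUf (q : Ultrafilter S) (hq : ∀ s : S, phi P s ∈ q) (p : Ultrafilter S) :
    Ultrafilter S :=
  Ultrafilter.ofComplNotMemIff
    { sets := {A | {x | shift P x A ∈ q} ∈ p}
      univ_sets := by
        simp only [Set.mem_setOf_eq]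
        have : {x : S | shift P x Set.univ ∈ q} = Set.univ := by
          ext x; simp [shift_univ, hq x]
        rw [this]; exact Filter.univ_mem
      sets_of_superset := by
        intro A B hA hAB
        exact Filter.mem_of_superset hA fun x hx =>
          Filter.mem_of_superset hx (shift_mono P hAB x)
      inter_sets := by
        intro A B hA hB
        refine Filter.mem_of_superset (Filter.inter_mem hA hB) ?_
        rintro x ⟨h1, h2⟩
        simp only [Set.mem_setOf_eq, shift_inter]
        exact Filter.inter_mem h1 h2 }
    (by
      intro A
      have key : ∀ x : S, shift P x Aᶜ ∈ q ↔ shift P x A ∉ q := by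
        intro x
        rw [shift_compl]
        constructor
        · intro h hA
          exact absurd (Filter.mem_of_superset h (Set.diff_subset_compl _ _))
            (by simpa using hA)
        · intro h
          exact (Set.diff_eq _ _) ▸
            Filter.inter_mem (hq x) (Ultrafilter.compl_mem_iff_notMem.mpr h)
      have hset : {x : S | shift P x Aᶜ ∈ q} = {x : S | shift P x A ∈ q}ᶜ :=
        Set.ext fun x => key x
      show {x : S | shift P x Aᶜ ∈ q} ∉ p ↔ {x : S | shift P x A ∈ q} ∈ p
      rw [hset]
      exact (Ultrafilter.compl_mem_iff_notMem (f := p)).not.trans not_not)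

theorem mem_sumUf {q : Ultrafilter S} {hq : ∀ s : S, phi P s ∈ q} {p : Ultrafilter S}
    {A : Set S} : A ∈ sumUf P q hq p ↔ {x : S | shift P x A ∈ q} ∈ p := Iff.rfl

theorem shift_shift (hassoc : Assoc P) {w y z : S} (h : P w y = some z) (A : Set S) :
    shift P y (shift P w A) = shift P z A := by
  ext u
  constructor
  · rintro ⟨v, ⟨a, ha, hwv⟩, hyu⟩
    have key := hassoc w y u
    rw [h, Option.bind_some, hyu, Option.bind_some, hwv] at key
    exact ⟨a, ha, key⟩
  · rintro ⟨a, ha, hzu⟩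
    have key := hassoc w y u
    rw [h, Option.bind_some, hzu] at key
    cases hyu : P y u with
    | none => rw [hyu, Option.bind_none] at key; cases key
    | some v =>
      rw [hyu, Option.bind_some] at key
      exact ⟨v, ⟨a, ha, key.symm⟩, hyu⟩

/-- `δS` is closed under the sum. -/
theorem sumUf_mem_delta (hassoc : Assoc P) {p q : Ultrafilter S}
    (hp : ∀ s : S, phi P s ∈ p) (hq : ∀ s : S, phi P s ∈ q) (s : S) :
    phi P s ∈ sumUf P q hq p := by
  rw [mem_sumUf]
  refine Filter.mem_of_superset (hp s) ?_
  intro w hw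
  obtain ⟨t, ht⟩ := Option.isSome_iff_exists.mp hw
  show shift P w (phi P s) ∈ q
  refine Filter.mem_of_superset (Filter.inter_mem (hq t) (hq w)) ?_
  rintro y ⟨hty, hwy⟩
  obtain ⟨c, hc⟩ := Option.isSome_iff_exists.mp hty
  have key := hassoc s w y
  rw [ht, Option.bind_some, hc] at key
  cases hwy' : P w y with
  | none =>
    simp only [phi, Set.mem_setOf_eq, hwy'] at hwy
    exact absurd hwy (by simp)
  | some u =>
    rw [hwy', Option.bind_some] at key
    exact ⟨u, by simp [phi, Set.mem_setOf_eq, ← key], hwy'⟩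

/-- Associativity of the sum on `δS`. -/
theorem sumUf_assoc (hassoc : Assoc P) {p q r : Ultrafilter S}
    (hq : ∀ s : S, phi P s ∈ q) (hr : ∀ s : S, phi P s ∈ r)
    (hqr : ∀ s : S, phi P s ∈ sumUf P r hr q) :
    sumUf P r hr (sumUf P q hq p) = sumUf P (sumUf P r hr q) hqr p := by
  apply Ultrafilter.coe_injective
  apply Filter.ext
  intro A
  show {w : S | shift P w {x : S | shift P x A ∈ r} ∈ q} ∈ p ↔
    {w : S | shift P w A ∈ sumUf P r hr q} ∈ p
  have hiff : ∀ w : S, shift P w {x : S | shift P x A ∈ r} ∈ q ↔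
      {y : S | shift P y (shift P w A) ∈ r} ∈ q := by
    intro w
    constructor
    · intro h
      refine Filter.mem_of_superset h ?_
      rintro y ⟨z, hz, hwy⟩
      show shift P y (shift P w A) ∈ r
      rw [shift_shift P hassoc hwy]
      exact hz
    · intro h
      refine Filter.mem_of_superset (Filter.inter_mem (hq w) h) ?_
      rintro y ⟨hphi, hy⟩
      obtain ⟨z, hwy⟩ := Option.isSome_iff_exists.mp hphi
      refine ⟨z, ?_, hwy⟩
      show shift P z A ∈ r
      rw [← shift_shift P hassoc hwy A]
      exact hy
  constructor
  · intro h
    exact Filter.mem_of_superset h fun w hw => (mem_sumUf P (hq := hr)).mpr ((hiff w).mp hw)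
  · intro h
    exact Filter.mem_of_superset h fun w hw => (hiff w).mpr ((mem_sumUf P (hq := hr)).mp hw)


theorem continuous_sumUf (q : Ultrafilter S) (hq : ∀ s : S, phi P s ∈ q) :
    Continuous (fun p : Ultrafilter S => sumUf P q hq p) := by
  refine ultrafilterBasis_is_basis.continuous_iff.mpr ?_
  rintro s ⟨A, rfl⟩
  exact ultrafilter_isOpen_basic {x : S | shift P x A ∈ q}

theorem listSum_cons (a : S) {l : List S} (hl : l ≠ []) :
    listSum P (a :: l) = (listSum P l).bind fun t => P a t := by
  cases l with
  | nil => exact absurd rfl hl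
  | cons b l => rfl

theorem listSum_append (hassoc : Assoc P) :
    ∀ (l₁ l₂ : List S), l₁ ≠ [] → l₂ ≠ [] →
    listSum P (l₁ ++ l₂) = (listSum P l₂).bind fun b => (listSum P l₁).bind fun a => P a b
  | [], _, h, _ => absurd rfl h
  | [a], l₂, _, h₂ => by
    rw [List.singleton_append, listSum_cons P a h₂]
    rfl
  | a :: b :: l, l₂, _, h₂ => by
    have ih := listSum_append hassoc (b :: l) l₂ (by simp) h₂
    rw [List.cons_append, listSum_cons P a (by simp), ih,
      show listSum P (a :: b :: l) = (listSum P (b :: l)).bind fun t => P a t from rfl]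
    cases listSum P l₂ with
    | none => rfl
    | some c =>
      cases listSum P (b :: l) with
      | none => rfl
      | some d =>
        simp only [Option.bind_some]
        exact (hassoc a d c).symm

theorem sort_union {H K : Finset ℕ} (hlt : ∀ s ∈ H, ∀ t ∈ K, s < t) :
    (H ∪ K).sort (· ≤ ·) = H.sort (· ≤ ·) ++ K.sort (· ≤ ·) := by
  have hd : Disjoint H K :=
    Finset.disjoint_left.mpr fun {a} ha hk => lt_irrefl a (hlt a ha a hk)
  apply List.Perm.eq_of_pairwise' (Finset.pairwise_sort _ _) ?_ ?_
  · exact List.pairwise_append.mpr ⟨Finset.pairwise_sort _ _, Finset.pairwise_sort _ _,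
      fun a ha b hb => le_of_lt
        (hlt a ((Finset.mem_sort _).mp ha) b ((Finset.mem_sort _).mp hb))⟩
  · apply Multiset.coe_eq_coe.mp
    have hval : (H ∪ K).val = H.val + K.val := by
      rw [← Finset.disjUnion_eq_union H K hd]; rfl
    rw [Finset.sort_eq, hval, ← Multiset.coe_add,
      Finset.sort_eq H (· ≤ ·), Finset.sort_eq K (· ≤ ·)]

theorem fsum_union (hassoc : Assoc P) (x : ℕ → S) {H K : Finset ℕ}
    (hH : H.Nonempty) (hK : K.Nonempty) (hlt : ∀ s ∈ H, ∀ t ∈ K, s < t) :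
    fsum P x (H ∪ K) = (fsum P x K).bind fun b => (fsum P x H).bind fun a => P a b := by
  unfold fsum
  rw [sort_union hlt, List.map_append]
  exact listSum_append P hassoc _ _
    (List.ne_nil_of_length_pos (by rw [List.length_map, Finset.length_sort]; exact hH.card_pos))
    (List.ne_nil_of_length_pos (by rw [List.length_map, Finset.length_sort]; exact hK.card_pos))

theorem fsum_singleton (x : ℕ → S) (n : ℕ) : fsum P x {n} = some (x n) := by
  unfold fsum
  rw [Finset.sort_singleton]
  rfl

theorem mem_FSfrom_self (x : ℕ → S) (m : ℕ) : x m ∈ FSfrom P x m :=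
  ⟨{m}, Finset.singleton_nonempty m, by simp, fsum_singleton P x m⟩

theorem FSfrom_anti (x : ℕ → S) {m m' : ℕ} (h : m ≤ m') :
    FSfrom P x m' ⊆ FSfrom P x m :=
  fun _ ⟨H, h1, h2, h3⟩ => ⟨H, h1, fun n hn => le_trans h (h2 n hn), h3⟩

theorem FSfrom_mem_sumUf (hassoc : Assoc P) (x : ℕ → S)
    (hx1 : ∀ F : Finset ℕ, F.Nonempty → (fsum P x F).isSome = true)
    {p q : Ultrafilter S} (hq : ∀ s : S, phi P s ∈ q)
    (hFp : ∀ m, FSfrom P x m ∈ p) (hFq : ∀ m, FSfrom P x m ∈ q) (m : ℕ) :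
    FSfrom P x m ∈ sumUf P q hq p := by
  rw [mem_sumUf]
  refine Filter.mem_of_superset (hFp m) ?_
  rintro a ⟨H, hHne, hHm, hHsum⟩
  show shift P a (FSfrom P x m) ∈ q
  refine Filter.mem_of_superset (hFq (H.max' hHne + 1)) ?_
  rintro b ⟨K, hKne, hKm, hKsum⟩
  have hlt : ∀ s ∈ H, ∀ t ∈ K, s < t := fun s hs t ht =>
    Nat.lt_of_le_of_lt (H.le_max' s hs) (Nat.lt_of_succ_le (hKm t ht))
  have hUne : (H ∪ K).Nonempty := hHne.mono Finset.subset_union_left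
  obtain ⟨c, hc⟩ := Option.isSome_iff_exists.mp (hx1 (H ∪ K) hUne)
  have key := fsum_union P hassoc x hHne hKne hlt
  rw [hc, hKsum, hHsum] at key
  simp only [Option.bind_some] at key
  refine ⟨c, ⟨H ∪ K, hUne, ?_, hc⟩, key.symm⟩
  intro n hn
  rcases Finset.mem_union.mp hn with h | h
  · exact hHm n h
  · exact le_trans (hHm _ (H.max'_mem hHne)) (le_trans (Nat.le_succ _) (hKm n h))

theorem exists_base_ultrafilter (x : ℕ → S)
    (hx2' : ∀ s : S, ∃ m, FSfrom P x m ⊆ phi P s) :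
    ∃ u : Ultrafilter S, (∀ m, FSfrom P x m ∈ u) ∧ (∀ s, phi P s ∈ u) := by
  classical
  have claim : ∀ T : Finset (Set S),
      (↑T : Set (Set S)) ⊆ (Set.range fun m => FSfrom P x m) ∪ Set.range (phi P) →
      ∃ m, ∀ A ∈ T, FSfrom P x m ⊆ A := by
    intro T
    induction T using Finset.induction_on with
    | empty => exact fun _ => ⟨0, by simp⟩
    | @insert A T' hAT' ih =>
      intro hsub
      obtain ⟨m₁, hm₁⟩ := ih fun B hB => hsub (by simp [hB])
      have hAmem : A ∈ (Set.range fun m => FSfrom P x m) ∪ Set.range (phi P) :=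
        hsub (Finset.mem_coe.mpr (Finset.mem_insert_self A T'))
      rcases hAmem with ⟨k, hk⟩ | ⟨s, hs⟩
      · have hk' : FSfrom P x k = A := hk
        refine ⟨max k m₁, fun B hB => ?_⟩
        rcases Finset.mem_insert.mp hB with rfl | hB'
        · intro y hy
          rw [← hk']
          exact FSfrom_anti P x (le_max_left k m₁) hy
        · exact le_trans (FSfrom_anti P x (le_max_right k m₁)) (hm₁ B hB')
      · obtain ⟨m₂, hm₂⟩ := hx2' s
        refine ⟨max m₂ m₁, fun B hB => ?_⟩
        rcases Finset.mem_insert.mp hB with rfl | hB'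
        · intro y hy
          rw [← hs]
          exact hm₂ (FSfrom_anti P x (le_max_left m₂ m₁) hy)
        · exact le_trans (FSfrom_anti P x (le_max_right m₂ m₁)) (hm₁ B hB')
  obtain ⟨u, hu⟩ := Ultrafilter.exists_ultrafilter_of_finite_inter_nonempty
    ((Set.range fun m => FSfrom P x m) ∪ Set.range (phi P)) (by
      intro T hT
      obtain ⟨m, hm⟩ := claim T hT
      exact ⟨x m, Set.mem_sInter.mpr fun A hA => hm A hA (mem_FSfrom_self P x m)⟩)
  exact ⟨u, fun m => hu (Or.inl ⟨m, rfl⟩), fun s => hu (Or.inr ⟨s, rfl⟩)⟩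

end PS

/-- There is an idempotent ultrafilter
`p ∈ ⋂_m cl(FS(⟨x_n⟩_{n=m}^∞)) ∩ δS`. -/
theorem statement2 {S : Type*} [Countable S] (P : S → S → Option S)
    (hassoc : PS.Assoc P) (hcomm : PS.Comm P) (hadeq : PS.Adequate P)
    (x : ℕ → S) (hx : PS.AdequateSeq P x) :
    ∃ p : Ultrafilter S, (∀ m : ℕ, PS.FSfrom P x m ∈ p) ∧ p ∈ PS.deltaS P ∧
      PS.IsSum P p p p := by
  classical
  obtain ⟨hx1, hx2⟩ := hx
  have hx2' : ∀ s : S, ∃ m, PS.FSfrom P x m ⊆ PS.phi P s := by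
    intro s
    obtain ⟨m, hm⟩ := hx2 {s} (Finset.singleton_nonempty s)
    exact ⟨m, fun y hy => (hm hy) s (Finset.mem_singleton_self s)⟩
  set D : Set (Ultrafilter S) := {p | ∀ s : S, PS.phi P s ∈ p} with hD
  letI : Semigroup ↥D :=
    { mul := fun p q => ⟨PS.sumUf P q.1 q.2 p.1, PS.sumUf_mem_delta P hassoc p.2 q.2⟩
      mul_assoc := fun p q r =>
        Subtype.ext (PS.sumUf_assoc P hassoc q.2 r.2 (PS.sumUf_mem_delta P hassoc q.2 r.2)) }
  have hDclosed : IsClosed D := by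
    have hDeq : D = ⋂ s : S, {p : Ultrafilter S | PS.phi P s ∈ p} := by
      ext p
      simp only [hD, Set.mem_setOf_eq, Set.mem_iInter]
    rw [hDeq]
    exact isClosed_iInter fun s => ultrafilter_isClosed_basic _
  haveI : CompactSpace ↥D := isCompact_iff_compactSpace.mp hDclosed.isCompact
  let T : Set ↥D := {p | ∀ m : ℕ, PS.FSfrom P x m ∈ p.1}
  have hTclosed : IsClosed T := by
    have hTeq : T = ⋂ m : ℕ,
        (Subtype.val ⁻¹' {u : Ultrafilter S | PS.FSfrom P x m ∈ u}) := by
      ext p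
      simp only [T, Set.mem_setOf_eq, Set.mem_iInter, Set.mem_preimage]
    rw [hTeq]
    exact isClosed_iInter fun m =>
      (ultrafilter_isClosed_basic _).preimage continuous_subtype_val
  have hTne : T.Nonempty := by
    obtain ⟨u, hu1, hu2⟩ := PS.exists_base_ultrafilter P x hx2'
    exact ⟨⟨u, hu2⟩, hu1⟩
  have hTmul : ∀ p ∈ T, ∀ q ∈ T, p * q ∈ T := fun p hp q hq m =>
    PS.FSfrom_mem_sumUf P hassoc x hx1 q.2 hp hq m
  have hcont : ∀ r : ↥D, Continuous (· * r) := fun r =>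
    ((PS.continuous_sumUf P r.1 r.2).comp continuous_subtype_val).subtype_mk _
  obtain ⟨q, hqT, hqq⟩ := exists_idempotent_in_compact_subsemigroup hcont T hTne
    hTclosed.isCompact hTmul
  refine ⟨q.1, hqT, q.2, ?_⟩
  intro A
  have h1 : PS.sumUf P q.1 q.2 q.1 = q.1 := congrArg Subtype.val hqq
  constructor
  · intro hA
    rw [← h1] at hA
    exact (PS.mem_sumUf P).mp hA
  · intro hA
    rw [← h1]
    exact (PS.mem_sumUf P).mpr hA
end

section
/- Let l ∈ ℕ, let (S_i,+) for i = 1,…,l be countable adequate commutative partial semigroups, for each i let ⟨y_{i,n}⟩_{n=1}^∞ be an adequate sequence in S_i, and let 𝓛 be the set of all p ∈ δ(S_1 × … × S_l) such that for every A ∈ p and all m, k ∈ ℕ, there exists for each i ∈ {1,…,l} a weak product subsystem ⟨x_{i,n}⟩_{n=1}^m of ⟨y_{i,n}⟩_{n=k}^∞ with ×_{i=1}^l FS(⟨x_{i,n}⟩_{n=1}^m) ⊆ A. Then for all p, q ∈ 𝓛, the product ultrafilter p+q belongs to 𝓛. -/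
namespace PSAux

open PS

variable {S : Type*}

/-- Totalized operation on `Option (Option S)`: `none` is "undefined" (absorbing),
`some none` is an adjoined identity, `some (some a)` is the element `a`. -/
def mop (P : S → S → Option S) : Option (Option S) → Option (Option S) → Option (Option S)
  | none, _ => none
  | _, none => none
  | some none, some b => some b
  | some (some a), some none => some (some a)
  | some (some a), some (some b) => (P a b).map some

theorem mop_none_left (P : S → S → Option S) (b : Option (Option S)) :
    mop P none b = none := by rcases b with _ | (_ | b) <;> rfl

theorem mop_none_right (P : S → S → Option S) (a : Option (Option S)) :
    mop P a none = none := by rcases a with _ | (_ | a) <;> rfl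

theorem mop_uu_left (P : S → S → Option S) (b : Option (Option S)) :
    mop P (some none) b = b := by rcases b with _ | (_ | b) <;> rfl

theorem mop_uu_right (P : S → S → Option S) (a : Option (Option S)) :
    mop P a (some none) = a := by rcases a with _ | (_ | a) <;> rfl

theorem mop_iota (P : S → S → Option S) (a b : S) :
    mop P (some (some a)) (some (some b)) = (P a b).map some := rfl

theorem mcomm {P : S → S → Option S} (hc : Comm P) (a b : Option (Option S)) :
    mop P a b = mop P b a := by
  rcases a with _ | (_ | a) <;> rcases b with _ | (_ | b) <;>
    first
      | rfl
      | rw [mop_iota, mop_iota, hc]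

theorem massoc {P : S → S → Option S} (ha : Assoc P) (a b c : Option (Option S)) :
    mop P (mop P a b) c = mop P a (mop P b c) := by
  have key : ∀ (o : Option S) (c : S),
      mop P (o.map some) (some (some c)) = (o.bind fun t => P t c).map some := by
    rintro (_ | t) c <;> rfl
  have key2 : ∀ (a : S) (o : Option S),
      mop P (some (some a)) (o.map some) = (o.bind fun t => P a t).map some := by
    rintro a (_ | t) <;> rfl
  rcases a with _ | (_ | a) <;> rcases b with _ | (_ | b) <;> rcases c with _ | (_ | c) <;>
    simp only [mop_none_left, mop_none_right, mop_uu_left, mop_uu_right, mop_iota]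
  · rw [key, key2, ha]

theorem mleftcomm {P : S → S → Option S} (ha : Assoc P) (hc : Comm P)
    (a b c : Option (Option S)) : mop P a (mop P b c) = mop P b (mop P a c) := by
  rw [← massoc ha, mcomm hc a b, massoc ha]

theorem minter {P : S → S → Option S} (ha : Assoc P) (hc : Comm P)
    (a b c d : Option (Option S)) :
    mop P (mop P a b) (mop P c d) = mop P (mop P a c) (mop P b d) := by
  rw [massoc ha, mleftcomm ha hc b c d, ← massoc ha]

/-- Fold of `mop` over a finite index set. -/
def mfold (P : S → S → Option S) (F : ℕ → Option (Option S)) (G : Finset ℕ) :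
    Option (Option S) :=
  ((G.sort (· ≤ ·)).map F).foldr (mop P) (some none)

theorem foldr_mop {P : S → S → Option S} (ha : Assoc P)
    (l : List (Option (Option S))) (c : Option (Option S)) :
    l.foldr (mop P) c = mop P (l.foldr (mop P) (some none)) c := by
  induction l with
  | nil => exact (mop_uu_left P c).symm
  | cons a l ih => simp only [List.foldr_cons, ih, ← massoc ha]

theorem foldr_perm {P : S → S → Option S} (ha : Assoc P) (hc : Comm P)
    {l₁ l₂ : List (Option (Option S))} (h : l₁.Perm l₂) (b : Option (Option S)) :
    l₁.foldr (mop P) b = l₂.foldr (mop P) b := by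
  haveI : LeftCommutative (mop P) := ⟨fun a b c => mleftcomm ha hc a b c⟩
  exact h.foldr_eq b

theorem mfold_empty (P : S → S → Option S) (F : ℕ → Option (Option S)) :
    mfold P F ∅ = some none := by
  simp [mfold, Finset.sort_empty]

theorem mfold_insert {P : S → S → Option S} (ha : Assoc P) (hc : Comm P)
    {F : ℕ → Option (Option S)} {a : ℕ} {G : Finset ℕ} (h : a ∉ G) :
    mfold P F (insert a G) = mop P (F a) (mfold P F G) := by
  have hperm : ((insert a G).sort (· ≤ ·)).Perm (a :: G.sort (· ≤ ·)) := by
    apply Multiset.coe_eq_coe.mp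
    show ((insert a G).sort (· ≤ ·) : Multiset ℕ) = ((a :: G.sort (· ≤ ·) : List ℕ) : Multiset ℕ)
    rw [Finset.sort_eq, Finset.insert_val_of_notMem h, ← Multiset.cons_coe, Finset.sort_eq]
  unfold mfold
  rw [foldr_perm ha hc (hperm.map F), List.map_cons, List.foldr_cons]

theorem mfold_congr {P : S → S → Option S} {F F' : ℕ → Option (Option S)} {G : Finset ℕ}
    (h : ∀ n ∈ G, F n = F' n) : mfold P F G = mfold P F' G := by
  unfold mfold
  congr 1
  apply List.map_congr_left
  intro x hx
  exact h x ((Finset.mem_sort _).mp hx)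

theorem mfold_union {P : S → S → Option S} (ha : Assoc P) (hc : Comm P)
    {F : ℕ → Option (Option S)} {A B : Finset ℕ} (hd : Disjoint A B) :
    mfold P F (A ∪ B) = mop P (mfold P F A) (mfold P F B) := by
  have hperm : ((A ∪ B).sort (· ≤ ·)).Perm (A.sort (· ≤ ·) ++ B.sort (· ≤ ·)) := by
    apply Multiset.coe_eq_coe.mp
    show ((A ∪ B).sort (· ≤ ·) : Multiset ℕ) = _
    rw [Finset.sort_eq, ← Finset.disjUnion_eq_union A B hd]
    show (A.disjUnion B hd).val = _
    rw [← Multiset.coe_add, Finset.sort_eq, Finset.sort_eq]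
    rfl
  unfold mfold
  rw [foldr_perm ha hc (hperm.map F), List.map_append, List.foldr_append, foldr_mop ha]

theorem mfold_mop {P : S → S → Option S} (ha : Assoc P) (hc : Comm P)
    (F₁ F₂ : ℕ → Option (Option S)) (G : Finset ℕ) :
    mfold P (fun n => mop P (F₁ n) (F₂ n)) G = mop P (mfold P F₁ G) (mfold P F₂ G) := by
  induction G using Finset.induction_on with
  | empty => rw [mfold_empty, mfold_empty, mfold_empty, mop_uu_left]
  | insert _ _ hn ih =>
      rw [mfold_insert ha hc hn, mfold_insert ha hc hn, mfold_insert ha hc hn, ih,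
        minter ha hc]

/-- The `mop`-valued sum of `y` over `H`. -/
def msum (P : S → S → Option S) (y : ℕ → S) (H : Finset ℕ) : Option (Option S) :=
  mfold P (fun t => some (some (y t))) H

theorem listSum_cons (P : S → S → Option S) (a b : S) (l : List S) :
    listSum P (a :: b :: l) = (listSum P (b :: l)).bind fun t => P a t := rfl

theorem foldr_iota (P : S → S → Option S) :
    ∀ l : List S, l ≠ [] →
      (l.map fun a => (some (some a) : Option (Option S))).foldr (mop P) (some none)
        = (listSum P l).map some := by
  intro l
  induction l with
  | nil => intro h; exact absurd rfl h
  | cons a l ih =>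
      intro _
      cases l with
      | nil =>
          show mop P (some (some a)) (some none) = _
          rw [mop_uu_right]
          rfl
      | cons b l =>
          rw [listSum_cons]
          simp only [List.map_cons, List.foldr_cons] at *
          rw [ih (by simp)]
          cases h : listSum P (b :: l) with
          | none => simp [mop_none_right]
          | some t => simp [mop_iota]

theorem msum_eq {P : S → S → Option S} {y : ℕ → S} {H : Finset ℕ} (h : H.Nonempty) :
    msum P y H = (fsum P y H).map some := by
  have hnil : (H.sort (· ≤ ·)).map y ≠ [] := by
    obtain ⟨a, ha⟩ := h
    have : a ∈ H.sort (· ≤ ·) := (Finset.mem_sort _).mpr ha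
    intro hcon
    simp only [List.map_eq_nil_iff] at hcon
    rw [hcon] at this
    exact (List.not_mem_nil this)
  unfold msum mfold fsum
  rw [show (H.sort (· ≤ ·)).map (fun t => (some (some (y t)) : Option (Option S)))
      = ((H.sort (· ≤ ·)).map y).map (fun a => (some (some a) : Option (Option S))) from by
    rw [List.map_map]; rfl]
  exact foldr_iota P _ hnil

theorem fsum_singleton (P : S → S → Option S) (y : ℕ → S) (n : ℕ) :
    fsum P y {n} = some (y n) := by
  unfold fsum
  rw [Finset.sort_singleton]
  rfl

theorem msum_biUnion {P : S → S → Option S} (ha : Assoc P) (hc : Comm P) (y : ℕ → S)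
    (W : ℕ → Finset ℕ) :
    ∀ G : Finset ℕ, (∀ n₁ ∈ G, ∀ n₂ ∈ G, n₁ ≠ n₂ → Disjoint (W n₁) (W n₂)) →
      msum P y (G.biUnion W) = mfold P (fun n => msum P y (W n)) G := by
  intro G
  induction G using Finset.induction_on with
  | empty => intro _; rw [Finset.biUnion_empty]; rw [mfold_empty]; exact mfold_empty P _
  | @insert a s hn ih =>
      intro hd
      have hdis : Disjoint (W a) (s.biUnion W) := by
        rw [Finset.disjoint_biUnion_right]
        intro n hns
        exact hd a (Finset.mem_insert_self a s) n (Finset.mem_insert_of_mem hns)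
          (fun he => hn (he ▸ hns))
      rw [Finset.biUnion_insert]
      unfold msum
      rw [mfold_union ha hc hdis, mfold_insert ha hc hn]
      have := ih (fun n₁ h₁ n₂ h₂ hne =>
        hd n₁ (Finset.mem_insert_of_mem h₁) n₂ (Finset.mem_insert_of_mem h₂) hne)
      unfold msum at this
      rw [this]

section Prod

variable {l : ℕ} {T : Fin l → Type*}

theorem prodOp_eq_some (P : ∀ i, T i → T i → Option (T i)) (a b : ∀ i, T i)
    (h : ∀ i, (P i (a i) (b i)).isSome) :
    prodOp P a b = some (fun i => (P i (a i) (b i)).get (h i)) := by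
  unfold prodOp
  rw [dif_pos h]

theorem prodOp_some_elim {P : ∀ i, T i → T i → Option (T i)} {a b c : ∀ i, T i}
    (h : prodOp P a b = some c) : ∀ i, P i (a i) (b i) = some (c i) := by
  unfold prodOp at h
  by_cases hs : ∀ i, (P i (a i) (b i)).isSome
  · rw [dif_pos hs] at h
    injection h with h'
    intro i
    rw [← h']
    exact (Option.some_get (hs i)).symm
  · rw [dif_neg hs] at h
    exact absurd h (by simp)

theorem mem_phi_prod {P : ∀ i, T i → T i → Option (T i)} {a b : ∀ i, T i} :
    b ∈ phi (prodOp P) a ↔ ∀ i, (P i (a i) (b i)).isSome := by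
  show (prodOp P a b).isSome = true ↔ _
  unfold prodOp
  by_cases h : ∀ i, (P i (a i) (b i)).isSome
  · simp [dif_pos h, h]
  · simp [dif_neg h, h]

end Prod

section Shift

variable {α : Type*} (Q : α → α → Option α)

theorem shift_subset_phi (x : α) (A : Set α) : shift Q x A ⊆ phi Q x := by
  rintro y ⟨z, _, hz⟩
  show (Q x y).isSome = true
  rw [hz]; rfl

theorem shift_inter (x : α) (A B : Set α) :
    shift Q x (A ∩ B) = shift Q x A ∩ shift Q x B := by
  ext y
  constructor
  · rintro ⟨z, ⟨hzA, hzB⟩, hz⟩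
    exact ⟨⟨z, hzA, hz⟩, ⟨z, hzB, hz⟩⟩
  · rintro ⟨⟨z, hzA, hz⟩, ⟨z', hzB, hz'⟩⟩
    rw [hz] at hz'
    injection hz' with h
    exact ⟨z, ⟨hzA, h ▸ hzB⟩, hz⟩

theorem shift_mono (x : α) {A B : Set α} (h : A ⊆ B) : shift Q x A ⊆ shift Q x B := by
  rintro y ⟨z, hzA, hz⟩
  exact ⟨z, h hzA, hz⟩

theorem shift_univ (x : α) : shift Q x Set.univ = phi Q x := by
  ext y
  constructor
  · exact fun h => shift_subset_phi Q x Set.univ h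
  · intro h
    obtain ⟨z, hz⟩ := Option.isSome_iff_exists.mp h
    exact ⟨z, trivial, hz⟩

theorem phi_subset_shift_union (x : α) (A : Set α) :
    phi Q x ⊆ shift Q x A ∪ shift Q x Aᶜ := by
  intro y hy
  obtain ⟨z, hz⟩ := Option.isSome_iff_exists.mp hy
  by_cases hA : z ∈ A
  · exact Or.inl ⟨z, hA, hz⟩
  · exact Or.inr ⟨z, hA, hz⟩

theorem shift_compl_disjoint (x : α) (A : Set α) :
    shift Q x A ∩ shift Q x Aᶜ = ∅ := by
  ext y
  simp only [Set.mem_inter_iff, Set.mem_empty_iff_false, iff_false]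
  rintro ⟨⟨z, hzA, hz⟩, ⟨z', hzA', hz'⟩⟩
  rw [hz] at hz'
  injection hz' with h
  exact hzA' (h ▸ hzA)

end Shift

theorem FSfin_finite (P : S → S → Option S) (x : ℕ → S) (m : ℕ) :
    (FSfin P x m).Finite := by
  classical
  have hsub : FSfin P x m ⊆ Option.some ⁻¹'
      ((((Finset.range m).powerset.image (fsum P x)) : Finset (Option S)) : Set (Option S)) := by
    rintro s ⟨H, _, hH, hs⟩
    simp only [Set.mem_preimage, Finset.coe_image, Set.mem_image, Finset.mem_coe,
      Finset.mem_powerset]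
    exact ⟨H, hH, hs⟩
  exact Set.Finite.subset
    (Set.Finite.preimage (Set.injOn_of_injective (Option.some_injective S))
      (Finset.finite_toSet _)) hsub

end PSAux

/-- With `𝓛` as in Statement 4, for all `p, q ∈ 𝓛` the product
ultrafilter `p + q` (exists and) belongs to `𝓛`. -/
theorem statement5 {l : ℕ} {S : Fin l → Type*} [∀ i, Countable (S i)]
    (P : ∀ i, S i → S i → Option (S i))
    (hassoc : ∀ i, PS.Assoc (P i)) (hcomm : ∀ i, PS.Comm (P i))
    (hadeq : ∀ i, PS.Adequate (P i))
    (y : ∀ i, ℕ → S i) (hy : ∀ i, PS.AdequateSeq (P i) (y i))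
    (L : Set (Ultrafilter (∀ i, S i)))
    (hL : L = {p : Ultrafilter (∀ i, S i) | p ∈ PS.deltaS (PS.prodOp P) ∧
      ∀ A ∈ p, ∀ m k : ℕ, ∃ xx : ∀ i, ℕ → S i,
        (∀ i, PS.IsWPS (P i) (y i) k m (xx i)) ∧
        {f : ∀ i, S i | ∀ i, f i ∈ PS.FSfin (P i) (xx i) m} ⊆ A}) :
    ∀ p ∈ L, ∀ q ∈ L,
      (∃ r : Ultrafilter (∀ i, S i), PS.IsSum (PS.prodOp P) r p q) ∧
      (∀ r : Ultrafilter (∀ i, S i), PS.IsSum (PS.prodOp P) r p q → r ∈ L) := by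
  classical
  subst hL
  intro p hp q hq
  simp only [Set.mem_setOf_eq] at hp hq
  obtain ⟨hpδ, hpL⟩ := hp
  obtain ⟨hqδ, hqL⟩ := hq
  set Q := PS.prodOp P with hQ
  -- complement behaviour of the candidate membership family
  have hcompl : ∀ A : Set (∀ i, S i),
      {x | PS.shift Q x Aᶜ ∈ q} = {x | PS.shift Q x A ∈ q}ᶜ := by
    intro A
    ext x
    simp only [Set.mem_setOf_eq, Set.mem_compl_iff]
    constructor
    · intro h1 h2
      have hint : PS.shift Q x A ∩ PS.shift Q x Aᶜ ∈ (q : Filter (∀ i, S i)) :=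
        Filter.inter_mem h2 h1
      rw [PSAux.shift_compl_disjoint] at hint
      exact Filter.empty_notMem (q : Filter (∀ i, S i)) hint
    · intro h2
      have hc : (PS.shift Q x A)ᶜ ∈ q := Ultrafilter.compl_mem_iff_notMem.mpr h2
      have hphi : PS.phi Q x ∈ q := hqδ x
      refine Filter.mem_of_superset (Filter.inter_mem hphi hc) ?_
      rintro yy ⟨hy1, hy2⟩
      rcases PSAux.phi_subset_shift_union Q x A hy1 with h | h
      · exact absurd h hy2
      · exact h
  -- the filter whose sets are exactly those of `p + q`
  let F : Filter (∀ i, S i) :=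
    { sets := {A | {x | PS.shift Q x A ∈ q} ∈ p}
      univ_sets := by
        simp only [Set.mem_setOf_eq]
        have huniv : ∀ x : ∀ i, S i, PS.shift Q x Set.univ ∈ q := fun x => by
          rw [PSAux.shift_univ]; exact hqδ x
        exact Filter.univ_mem' huniv
      sets_of_superset := by
        intro A B hA hAB
        exact Filter.mem_of_superset hA fun x hx =>
          Filter.mem_of_superset hx (PSAux.shift_mono Q x hAB)
      inter_sets := by
        intro A B hA hB
        simp only [Set.mem_setOf_eq] at *
        refine Filter.mem_of_superset (Filter.inter_mem hA hB) ?_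
        rintro x ⟨hxA, hxB⟩
        show PS.shift Q x (A ∩ B) ∈ q
        rw [PSAux.shift_inter]
        exact Filter.inter_mem hxA hxB }
  have hultra : ∀ A : Set (∀ i, S i), Aᶜ ∉ F ↔ A ∈ F := by
    intro A
    show ¬({x | PS.shift Q x Aᶜ ∈ q} ∈ p) ↔ ({x | PS.shift Q x A ∈ q} ∈ p)
    rw [hcompl A]
    exact Ultrafilter.compl_notMem_iff
  -- main part: any r with IsSum belongs to L
  have key : ∀ r : Ultrafilter (∀ i, S i), PS.IsSum Q r p q →
      r ∈ PS.deltaS Q ∧ ∀ A ∈ r, ∀ m k : ℕ, ∃ xx : ∀ i, ℕ → S i,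
        (∀ i, PS.IsWPS (P i) (y i) k m (xx i)) ∧
        {f : ∀ i, S i | ∀ i, f i ∈ PS.FSfin (P i) (xx i) m} ⊆ A := by
    intro r hr
    constructor
    · -- r ∈ δS
      intro s
      rw [hr (PS.phi Q s)]
      refine Filter.mem_of_superset (hpδ s) ?_
      intro x hx
      have hxs : ∀ i, (P i (s i) (x i)).isSome := PSAux.mem_phi_prod.mp hx
      show PS.shift Q x (PS.phi Q s) ∈ q
      refine Filter.mem_of_superset
        (Filter.inter_mem (hqδ (fun i => (P i (s i) (x i)).get (hxs i))) (hqδ x)) ?_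
      rintro yy ⟨hy1, hy2⟩
      have hy1' : ∀ i, (P i ((P i (s i) (x i)).get (hxs i)) (yy i)).isSome :=
        PSAux.mem_phi_prod.mp hy1
      have hy2' : ∀ i, (P i (x i) (yy i)).isSome := PSAux.mem_phi_prod.mp hy2
      refine ⟨fun i => (P i (x i) (yy i)).get (hy2' i), ?_,
        PSAux.prodOp_eq_some P x yy hy2'⟩
      apply PSAux.mem_phi_prod.mpr
      intro i
      have hass := hassoc i (s i) (x i) (yy i)
      have h1 : P i (s i) (x i) = some ((P i (s i) (x i)).get (hxs i)) :=
        (Option.some_get (hxs i)).symm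
      have h2 : P i (x i) (yy i) = some ((P i (x i) (yy i)).get (hy2' i)) :=
        (Option.some_get (hy2' i)).symm
      rw [h1, h2] at hass
      simp only [Option.bind_some] at hass
      rw [← hass]
      exact hy1' i
    · -- combinatorial condition
      intro A hA m k
      have hB : {x | PS.shift Q x A ∈ q} ∈ p := (hr A).mp hA
      obtain ⟨u, hu, huB⟩ := hpL _ hB m k
      set U : Set (∀ i, S i) := {f | ∀ i, f i ∈ PS.FSfin (P i) (u i) m} with hU
      have hUfin : U.Finite := by
        have hUpi : U = Set.pi Set.univ (fun i => PS.FSfin (P i) (u i) m) := by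
          ext f
          simp [hU, Set.mem_pi]
        rw [hUpi]
        exact Set.Finite.pi fun i => PSAux.FSfin_finite _ _ _
      have hC : (⋂ x ∈ U, PS.shift Q x A) ∈ (q : Filter (∀ i, S i)) := by
        rw [Filter.biInter_mem hUfin]
        exact fun x hx => huB hx
      choose Hw hHw using hu
      set N : ℕ := Finset.univ.sup
        (fun i : Fin l => (Finset.range m).sup (fun n => (Hw i n).sup id)) with hN
      have hNbd : ∀ i, ∀ n < m, ∀ t ∈ Hw i n, t ≤ N := by
        intro i n hn t ht
        calc t = id t := rfl
        _ ≤ (Hw i n).sup id := Finset.le_sup ht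
        _ ≤ (Finset.range m).sup (fun n => (Hw i n).sup id) :=
            Finset.le_sup (f := fun n => (Hw i n).sup id) (Finset.mem_range.mpr hn)
        _ ≤ N := Finset.le_sup
            (f := fun i : Fin l => (Finset.range m).sup fun n => (Hw i n).sup id)
            (Finset.mem_univ i)
      obtain ⟨v, hv, hvC⟩ := hqL _ hC m (max k (N + 1))
      choose Kw hKw using hv
      -- pointwise definedness of u-n + v-n
      have hdef : ∀ n, n < m → ∀ i, (P i (u i n) (v i n)).isSome := by
        intro n hn
        have hun : (fun i => u i n) ∈ U := by
          intro i
          exact ⟨{n}, Finset.singleton_nonempty n,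
            Finset.singleton_subset_iff.mpr (Finset.mem_range.mpr hn),
            PSAux.fsum_singleton _ _ _⟩
        have hvn : (fun i => v i n) ∈ ⋂ x ∈ U, PS.shift Q x A := by
          apply hvC
          intro i
          exact ⟨{n}, Finset.singleton_nonempty n,
            Finset.singleton_subset_iff.mpr (Finset.mem_range.mpr hn),
            PSAux.fsum_singleton _ _ _⟩
        obtain ⟨z, _, hz⟩ := Set.mem_iInter₂.mp hvn _ hun
        intro i
        rw [PSAux.prodOp_some_elim hz i]
        rfl
      set xx : ∀ i, ℕ → S i := fun i n => (P i (u i n) (v i n)).getD (u i n) with hxx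
      have hxxs : ∀ n, n < m → ∀ i, P i (u i n) (v i n) = some (xx i n) := by
        intro n hn i
        obtain ⟨w, hw⟩ := Option.isSome_iff_exists.mp (hdef n hn i)
        rw [hxx]
        simp [hw]
      have hHK : ∀ i, ∀ n₁ < m, ∀ n₂ < m, Disjoint (Hw i n₁) (Kw i n₂) := by
        intro i n₁ h₁ n₂ h₂
        rw [Finset.disjoint_left]
        intro t htH htK
        have hb1 := hNbd i n₁ h₁ t htH
        have hb2 := (hKw i).2.1 n₂ h₂ t htK
        have : N + 1 ≤ t := le_trans (le_max_right _ _) hb2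
        omega
      refine ⟨xx, ?_, ?_⟩
      · -- xx is a weak product subsystem
        intro i
        obtain ⟨hH1, hH2, hH3, hH4⟩ := hHw i
        obtain ⟨hK1, hK2, hK3, hK4⟩ := hKw i
        refine ⟨fun n => Hw i n ∪ Kw i n, ?_, ?_, ?_, ?_⟩
        · intro n hn
          obtain ⟨t, ht⟩ := hH1 n hn
          exact ⟨t, Finset.mem_union_left _ ht⟩
        · intro n hn t ht
          rcases Finset.mem_union.mp ht with h | h
          · exact hH2 n hn t h
          · exact le_trans (le_max_left _ _) (hK2 n hn t h)
        · intro n₁ h₁ n₂ h₂ hne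
          refine Finset.disjoint_union_left.mpr ⟨?_, ?_⟩ <;>
            refine Finset.disjoint_union_right.mpr ⟨?_, ?_⟩
          · exact hH3 n₁ h₁ n₂ h₂ hne
          · exact hHK i n₁ h₁ n₂ h₂
          · exact (hHK i n₂ h₂ n₁ h₁).symm
          · exact hK3 n₁ h₁ n₂ h₂ hne
        · intro n hn
          have hdisj : Disjoint (Hw i n) (Kw i n) := hHK i n hn n hn
          have h1 : PSAux.msum (P i) (y i) (Hw i n ∪ Kw i n)
              = PSAux.mop (P i) (PSAux.msum (P i) (y i) (Hw i n))
                  (PSAux.msum (P i) (y i) (Kw i n)) :=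
            PSAux.mfold_union (hassoc i) (hcomm i) hdisj
          have hne : (Hw i n ∪ Kw i n).Nonempty := by
            obtain ⟨t, ht⟩ := hH1 n hn
            exact ⟨t, Finset.mem_union_left _ ht⟩
          rw [PSAux.msum_eq hne, PSAux.msum_eq (hH1 n hn), PSAux.msum_eq (hK1 n hn),
            hH4 n hn, hK4 n hn] at h1
          simp only [Option.map_some] at h1
          rw [PSAux.mop_iota, hxxs n hn i] at h1
          cases hf : PS.fsum (P i) (y i) (Hw i n ∪ Kw i n) with
          | none => rw [hf] at h1; simp at h1
          | some t =>
              rw [hf] at h1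
              simp only [Option.map_some, Option.some.injEq] at h1
              rw [h1]
      · -- the box lands in A
        intro f hf
        have keyi : ∀ i, ∃ g : S i, ∃ h' : S i,
            g ∈ PS.FSfin (P i) (u i) m ∧ h' ∈ PS.FSfin (P i) (v i) m ∧
              P i g h' = some (f i) := by
          intro i
          obtain ⟨G, hGne, hGsub, hGsum⟩ := hf i
          have h1 : PSAux.msum (P i) (xx i) G
              = PSAux.mop (P i) (PSAux.msum (P i) (u i) G) (PSAux.msum (P i) (v i) G) := by
            have hcongr : PSAux.msum (P i) (xx i) G = PSAux.mfold (P i)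
                (fun n => PSAux.mop (P i) (some (some (u i n))) (some (some (v i n)))) G := by
              unfold PSAux.msum
              apply PSAux.mfold_congr
              intro n hnG
              have hn : n < m := Finset.mem_range.mp (hGsub hnG)
              rw [PSAux.mop_iota, hxxs n hn i]
              rfl
            rw [hcongr, PSAux.mfold_mop (hassoc i) (hcomm i)]
            rfl
          rw [PSAux.msum_eq hGne, PSAux.msum_eq hGne, PSAux.msum_eq hGne, hGsum] at h1
          simp only [Option.map_some] at h1
          cases hgu : PS.fsum (P i) (u i) G with
          | none => rw [hgu] at h1; simp [PSAux.mop_none_left] at h1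
          | some g =>
              cases hgv : PS.fsum (P i) (v i) G with
              | none => rw [hgu, hgv] at h1; simp [PSAux.mop_none_right] at h1
              | some h' =>
                  rw [hgu, hgv] at h1
                  simp only [Option.map_some] at h1
                  rw [PSAux.mop_iota] at h1
                  refine ⟨g, h', ⟨G, hGne, hGsub, hgu⟩, ⟨G, hGne, hGsub, hgv⟩, ?_⟩
                  cases hp : P i g h' with
                  | none => rw [hp] at h1; simp at h1
                  | some w =>
                      rw [hp] at h1
                      simp only [Option.map_some, Option.some.injEq] at h1
                      rw [h1]
        choose g h' hg hh hP using keyi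
        have hgU : g ∈ U := hg
        have hhC : h' ∈ ⋂ x ∈ U, PS.shift Q x A := hvC hh
        obtain ⟨z, hzA, hz⟩ := Set.mem_iInter₂.mp hhC g hgU
        have hzi : ∀ i, P i (g i) (h' i) = some (z i) := PSAux.prodOp_some_elim hz
        have hfz : f = z := by
          funext i
          have := hzi i
          rw [hP i] at this
          injection this
        rw [hfz]
        exact hzA
  refine ⟨⟨Ultrafilter.ofComplNotMemIff F hultra, fun A => Iff.rfl⟩, ?_⟩
  intro r hr
  exact key r hr
end
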